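/- Let λ and μ be real numbers with 0 < λ < 1 < |μ|, and let A be a 2×2 real matrix such that A = P * D * P⁻¹ for some invertible 2×2 real matrix P, where D is the diagonal matrix with diagonal entries λ and μ. Let J > 0 and let G : ℝ² → ℝ² be any function such that ‖G(y) - A⁻¹ y‖ ≤ J for every y ∈ ℝ². Then there exists x ∈ ℝ² such that ‖Gⁿ(x) - Gⁿ(0)‖ tends to infinity as n tends to infinity, where Gⁿ denotes the n-fold iterate G^[n] of G and ‖·‖ denotes the Euclidean norm on ℝ² = EuclideanSpace ℝ (Fin 2). -/
import Mathlib

open scoped Matrix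

set_option maxHeartbeats 1000000 in
/-- If `A = P diag(λ, μ) P⁻¹` with `0 < λ < 1 < |μ|` and `G : ℝ² → ℝ²` stays within distance
`J` of the linear map `A⁻¹`, then some orbit pair `Gⁿ(x), Gⁿ(0)` separates to infinity. -/
theorem stmt_10 (lam mu : ℝ) (hlam0 : 0 < lam) (hlam1 : lam < 1) (hmu : 1 < |mu|)
    (A P : Matrix (Fin 2) (Fin 2) ℝ) (hP : IsUnit P.det)
    (hA : A = P * Matrix.diagonal ![lam, mu] * P⁻¹)
    (J : ℝ) (hJ : 0 < J)
    (G : EuclideanSpace ℝ (Fin 2) → EuclideanSpace ℝ (Fin 2))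
    (hG : ∀ y : EuclideanSpace ℝ (Fin 2), ‖G y - Matrix.toEuclideanLin A⁻¹ y‖ ≤ J) :
    ∃ x : EuclideanSpace ℝ (Fin 2),
      Filter.Tendsto (fun n : ℕ => ‖G^[n] x - G^[n] 0‖) Filter.atTop Filter.atTop := by
  have hmu0 : mu ≠ 0 := by
    intro h; rw [h] at hmu; simp at hmu; linarith
  set D : Matrix (Fin 2) (Fin 2) ℝ := Matrix.diagonal ![lam, mu] with hD
  have hDdet : IsUnit D.det := by
    rw [hD, Matrix.det_diagonal, Fin.prod_univ_two]
    simp only [Matrix.cons_val_zero, Matrix.cons_val_one, Matrix.head_cons]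
    exact isUnit_iff_ne_zero.mpr (mul_ne_zero (ne_of_gt hlam0) hmu0)
  -- A⁻¹ = P * D⁻¹ * P⁻¹
  have hAinv : A⁻¹ = P * D⁻¹ * P⁻¹ := by
    rw [hA, Matrix.mul_inv_rev, Matrix.mul_inv_rev, Matrix.nonsing_inv_nonsing_inv P hP,
      mul_assoc]
  -- key matrix identity
  have hkeyM : P⁻¹ * A⁻¹ = D⁻¹ * P⁻¹ := by
    rw [hAinv, ← mul_assoc, ← mul_assoc, Matrix.nonsing_inv_mul P hP, one_mul]
  -- the linear functional f
  let l : EuclideanSpace ℝ (Fin 2) →ₗ[ℝ] ℝ :=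
    { toFun := fun w => (P⁻¹ *ᵥ (WithLp.equiv 2 (Fin 2 → ℝ) w)) 0
      map_add' := by intro a b; simp [Matrix.mulVec_add]
      map_smul' := by intro c a; simp [Matrix.mulVec_smul] }
  let f : EuclideanSpace ℝ (Fin 2) →L[ℝ] ℝ := LinearMap.toContinuousLinearMap l
  have hf_apply : ∀ w : EuclideanSpace ℝ (Fin 2),
      f w = (P⁻¹ *ᵥ (WithLp.equiv 2 (Fin 2 → ℝ) w)) 0 := fun _ => rfl
  -- eigen-functional property
  have hDinv : D⁻¹ = Matrix.diagonal ![lam⁻¹, mu⁻¹] := by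
    apply Matrix.inv_eq_right_inv
    rw [hD, Matrix.diagonal_mul_diagonal]
    ext i j
    fin_cases i <;> fin_cases j <;>
      simp [Matrix.diagonal_apply, Matrix.one_apply,
        mul_inv_cancel₀ (ne_of_gt hlam0), mul_inv_cancel₀ hmu0]
  have hDinv0 : ∀ v : Fin 2 → ℝ, (D⁻¹ *ᵥ v) 0 = lam⁻¹ * v 0 := by
    intro v
    rw [hDinv, Matrix.mulVec_diagonal]
    simp
  have hkey : ∀ y : EuclideanSpace ℝ (Fin 2),
      f (Matrix.toEuclideanLin A⁻¹ y) = lam⁻¹ * f y := by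
    intro y
    rw [hf_apply, hf_apply]
    have : (WithLp.equiv 2 (Fin 2 → ℝ)) (Matrix.toEuclideanLin A⁻¹ y)
        = A⁻¹ *ᵥ (WithLp.equiv 2 (Fin 2 → ℝ)) y := rfl
    rw [this, Matrix.mulVec_mulVec, hkeyM, ← Matrix.mulVec_mulVec]
    exact hDinv0 _
  -- a point where f equals 1
  set x0 : EuclideanSpace ℝ (Fin 2) := (WithLp.equiv 2 (Fin 2 → ℝ)).symm (P *ᵥ ![1, 0]) with hx0
  have hfx0 : f x0 = 1 := by
    rw [hf_apply, hx0]
    have : (WithLp.equiv 2 (Fin 2 → ℝ)) ((WithLp.equiv 2 (Fin 2 → ℝ)).symm (P *ᵥ ![1, 0]))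
        = P *ᵥ ![1, 0] := rfl
    rw [this, Matrix.mulVec_mulVec, Matrix.nonsing_inv_mul P hP, Matrix.one_mulVec]
    rfl
  set K : ℝ := ‖f‖ with hK
  have hK0 : 0 < K := by
    rcases lt_or_eq_of_le (norm_nonneg f) with h | h
    · exact h
    · exfalso
      have : f = 0 := by
        rw [← norm_eq_zero]; exact h.symm
      rw [this] at hfx0; simp at hfx0
  -- growth constants
  have hlaminv : 1 < lam⁻¹ := by
    rw [lt_inv_comm₀ zero_lt_one hlam0]
    simpa using hlam1
  set r : ℝ := (1 + lam⁻¹) / 2 with hr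
  have hr1 : 1 < r := by rw [hr]; linarith
  have hrlt : r < lam⁻¹ := by rw [hr]; linarith
  set c : ℝ := 2 * J * K / (lam⁻¹ - r) with hc
  have hc0 : 0 < c := by
    apply div_pos (by positivity)
    linarith
  have hne : lam⁻¹ - r ≠ 0 := ne_of_gt (by linarith)
  have hceq : (lam⁻¹ - r) * c = 2 * J * K := by
    rw [hc, mul_comm, div_mul_cancel₀ _ hne]
  -- the point x
  refine ⟨c • x0, ?_⟩
  have hfx : f (c • x0) = c := by rw [map_smul, hfx0]; simp
  -- main induction
  have habound : ∀ w : EuclideanSpace ℝ (Fin 2), |f w| ≤ K * ‖w‖ := by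
    intro w
    calc |f w| = ‖f w‖ := rfl
    _ ≤ K * ‖w‖ := f.le_opNorm w
  have ha : ∀ n : ℕ, c * r ^ n ≤ |f (G^[n] (c • x0) - G^[n] 0)| := by
    intro n
    induction n with
    | zero => simp [hfx, abs_of_pos hc0]
    | succ n ih =>
      set y := G^[n] (c • x0)
      set z := G^[n] (0 : EuclideanSpace ℝ (Fin 2))
      have hsplit : G y - G z =
          (G y - Matrix.toEuclideanLin A⁻¹ y) - (G z - Matrix.toEuclideanLin A⁻¹ z)
            + Matrix.toEuclideanLin A⁻¹ (y - z) := by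
        rw [map_sub]; abel
      have hfy := habound (G y - Matrix.toEuclideanLin A⁻¹ y)
      have hfz := habound (G z - Matrix.toEuclideanLin A⁻¹ z)
      have h1 : |f (G y - Matrix.toEuclideanLin A⁻¹ y)| ≤ K * J :=
        hfy.trans (mul_le_mul_of_nonneg_left (hG y) hK0.le)
      have h2 : |f (G z - Matrix.toEuclideanLin A⁻¹ z)| ≤ K * J :=
        hfz.trans (mul_le_mul_of_nonneg_left (hG z) hK0.le)
      have heval : f (G y - G z) =
          f (G y - Matrix.toEuclideanLin A⁻¹ y) - f (G z - Matrix.toEuclideanLin A⁻¹ z)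
            + lam⁻¹ * f (y - z) := by
        rw [hsplit]; rw [map_add, map_sub, hkey]
      have habs : |lam⁻¹ * f (y - z)| = lam⁻¹ * |f (y - z)| := by
        rw [abs_mul, abs_of_pos (by positivity : (0:ℝ) < lam⁻¹)]
      have htri : |f (G y - Matrix.toEuclideanLin A⁻¹ y)
          - f (G z - Matrix.toEuclideanLin A⁻¹ z)| ≤ 2 * (K * J) := by
        calc _ ≤ |f (G y - Matrix.toEuclideanLin A⁻¹ y)|
            + |f (G z - Matrix.toEuclideanLin A⁻¹ z)| := abs_sub _ _
        _ ≤ 2 * (K * J) := by linarith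
      have hlow : lam⁻¹ * |f (y - z)| - 2 * (K * J) ≤ |f (G y - G z)| := by
        have e1 : lam⁻¹ * f (y - z) = f (G y - G z)
            - (f (G y - Matrix.toEuclideanLin A⁻¹ y)
              - f (G z - Matrix.toEuclideanLin A⁻¹ z)) := by
          rw [heval]; ring
        have h3 : |lam⁻¹ * f (y - z)| ≤ |f (G y - G z)|
            + |f (G y - Matrix.toEuclideanLin A⁻¹ y)
              - f (G z - Matrix.toEuclideanLin A⁻¹ z)| := by
          rw [e1]; exact abs_sub _ _
        rw [habs] at h3
        linarith
      have hiter : G^[n+1] (c • x0) - G^[n+1] 0 = G y - G z := by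
        rw [Function.iterate_succ_apply', Function.iterate_succ_apply']
      rw [hiter]
      have hfyz : f (y - z) = f y - f z := map_sub f y z
      have hpow1 : (1:ℝ) ≤ r ^ n := one_le_pow₀ hr1.le
      have hgrow : c * r ^ (n+1) ≤ lam⁻¹ * (c * r ^ n) - 2 * (K * J) := by
        have h2KJ : 2 * (K * J) = (lam⁻¹ - r) * c := by rw [hceq]; ring
        have hkey2 : 0 ≤ (lam⁻¹ - r) * c * (r ^ n - 1) :=
          mul_nonneg (mul_nonneg (by linarith) hc0.le) (by linarith)
        rw [h2KJ, pow_succ]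
        nlinarith [hkey2]
      have h4 : lam⁻¹ * (c * r ^ n) ≤ lam⁻¹ * |f (y - z)| :=
        mul_le_mul_of_nonneg_left ih (by positivity)
      linarith
  -- conclude
  have hnorm : ∀ n : ℕ, (c / K) * r ^ n ≤ ‖G^[n] (c • x0) - G^[n] 0‖ := by
    intro n
    have h1 := ha n
    have h2 := habound (G^[n] (c • x0) - G^[n] 0)
    rw [div_mul_eq_mul_div, div_le_iff₀ hK0]
    exact h1.trans (h2.trans_eq (mul_comm K _))
  have htend : Filter.Tendsto (fun n : ℕ => (c / K) * r ^ n) Filter.atTop Filter.atTop :=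
    (tendsto_pow_atTop_atTop_of_one_lt hr1).const_mul_atTop (div_pos hc0 hK0)
  exact Filter.tendsto_atTop_mono hnorm htend
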